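/- For integers $n, k \geq 1$, the number of tuples $(\sigma_1,\dots,\sigma_n) \in \mathbb{N}^n$ of positive integers with $2^{kn} < \sigma_1\cdots\sigma_n \leq 2^{(k+1)n}$ is at most $(e(k+2)\cdot 2^{k+1})^n$. -/

import Mathlib

open Finset Real

lemma geom_bound {x : ℝ} (h0 : 0 ≤ x) (h1 : x < 1) (m : ℕ) :
    ∑ j ∈ Finset.range m, x ^ j ≤ (1 - x)⁻¹ := by
  have hx1 : (0:ℝ) < 1 - x := by linarith
  have hxm : (0:ℝ) ≤ x ^ m := pow_nonneg h0 m
  rw [geom_sum_eq (by linarith : x ≠ 1)]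
  calc (x ^ m - 1) / (x - 1) = (1 - x ^ m) / (1 - x) := by
        rw [← neg_div_neg_eq]; ring_nf
    _ ≤ 1 / (1 - x) := by gcongr; · linarith
    _ = (1 - x)⁻¹ := one_div _

theorem stmt10 (n k : ℕ) (hn : 1 ≤ n) (hk : 1 ≤ k) :
    (Set.ncard {σ : Fin n → ℕ | (∀ i, 1 ≤ σ i) ∧
        2 ^ (k * n) < ∏ i, σ i ∧ ∏ i, σ i ≤ 2 ^ ((k + 1) * n)} : ℝ)
      ≤ (Real.exp 1 * (k + 2) * 2 ^ (k + 1)) ^ n := by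
  classical
  set M := (k + 1) * n with hM
  set S : Set (Fin n → ℕ) := {σ : Fin n → ℕ | (∀ i, 1 ≤ σ i) ∧
        2 ^ (k * n) < ∏ i, σ i ∧ ∏ i, σ i ≤ 2 ^ ((k + 1) * n)} with hS
  set A : Finset (Fin n → ℕ) :=
    (Fintype.piFinset (fun _ : Fin n => Finset.range (M + 1))).filter
      (fun a => ∑ i, a i ≤ M) with hA
  set T : Finset (Σ _ : Fin n → ℕ, Fin n → ℕ) :=
    A.sigma (fun a => Fintype.piFinset (fun i => Finset.range (2 ^ a i))) with hT
  -- Step 1: ncard S ≤ T.card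
  have h1 : S.ncard ≤ T.card := by
    rw [← Set.ncard_coe_finset]
    apply Set.ncard_le_ncard_of_injOn
      (fun σ => (⟨fun i => Nat.log 2 (σ i), fun i => σ i - 2 ^ Nat.log 2 (σ i)⟩ :
        Σ _ : Fin n → ℕ, Fin n → ℕ))
    · rintro σ ⟨hpos, -, hle⟩
      have hsum : ∑ i, Nat.log 2 (σ i) ≤ M := by
        have hp : (2:ℕ) ^ (∑ i, Nat.log 2 (σ i)) ≤ 2 ^ M := by
          calc (2:ℕ) ^ (∑ i, Nat.log 2 (σ i)) = ∏ i, 2 ^ Nat.log 2 (σ i) := by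
                rw [Finset.prod_pow_eq_pow_sum]
            _ ≤ ∏ i, σ i := Finset.prod_le_prod' (fun i _ =>
                Nat.pow_log_le_self 2 (Nat.one_le_iff_ne_zero.mp (hpos i)))
            _ ≤ 2 ^ M := hle
        exact (Nat.pow_le_pow_iff_right one_lt_two).mp hp
      simp only [Finset.mem_coe, hT, Finset.mem_sigma, hA, Finset.mem_filter,
        Fintype.mem_piFinset, Finset.mem_range]
      refine ⟨⟨fun i => Nat.lt_succ_of_le ?_, hsum⟩, fun i => ?_⟩
      · exact le_trans (Finset.single_le_sum (f := fun i : Fin n => Nat.log 2 (σ i))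
          (fun j _ => Nat.zero_le _) (Finset.mem_univ i)) hsum
      · have h2 := Nat.lt_pow_succ_log_self (by norm_num : 1 < 2) (σ i)
        have h3 : 2 ^ (Nat.log 2 (σ i)).succ = 2 ^ Nat.log 2 (σ i) * 2 := pow_succ 2 _
        omega
    · rintro σ ⟨hposσ, -, -⟩ τ ⟨hposτ, -, -⟩ hst
      obtain ⟨ha, hr⟩ := Sigma.mk.inj_iff.mp hst
      rw [heq_iff_eq] at hr
      funext i
      have ha' := congrFun ha i
      have hr' := congrFun hr i
      have p1 : 2 ^ Nat.log 2 (σ i) ≤ σ i :=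
        Nat.pow_log_le_self 2 (Nat.one_le_iff_ne_zero.mp (hposσ i))
      have p2 : 2 ^ Nat.log 2 (τ i) ≤ τ i :=
        Nat.pow_log_le_self 2 (Nat.one_le_iff_ne_zero.mp (hposτ i))
      rw [ha'] at p1 hr'
      omega
  -- Step 2: T.card
  have h2 : T.card = ∑ a ∈ A, 2 ^ (∑ i, a i) := by
    rw [hT, Finset.card_sigma]
    refine Finset.sum_congr rfl fun a ha => ?_
    rw [Fintype.card_piFinset]
    simp [Finset.card_range, Finset.prod_pow_eq_pow_sum]
  -- Real parameters
  set t : ℝ := (k + 1) / (2 * (k + 2)) with ht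
  have hk1 : (0:ℝ) < (k:ℝ) + 1 := by positivity
  have hk2 : (0:ℝ) < (k:ℝ) + 2 := by positivity
  have ht0 : 0 < t := by positivity
  have h2t : 2 * t = ((k:ℝ) + 1) / ((k:ℝ) + 2) := by
    rw [ht]; field_simp
  have h2t1 : 2 * t < 1 := by
    rw [h2t, div_lt_one hk2]; linarith
  have h2t0 : 0 ≤ 2 * t := by positivity
  have h1m2ta : (1 - 2 * t) = ((k:ℝ) + 2)⁻¹ := by
    rw [h2t]; field_simp; norm_num
  have h1m2t : (1 - 2 * t)⁻¹ = (k:ℝ) + 2 := by rw [h1m2ta, inv_inv]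
  have htinv : t⁻¹ = 2 * (((k:ℝ) + 2) / ((k:ℝ) + 1)) := by
    rw [ht]; field_simp
    try ring
  have htinv1 : 1 ≤ t⁻¹ := by
    rw [htinv]
    have h5 : (1:ℝ) ≤ ((k:ℝ) + 2) / ((k:ℝ) + 1) := (one_le_div hk1).mpr (by linarith)
    have h6 : (0:ℝ) ≤ ((k:ℝ) + 2) / ((k:ℝ) + 1) := by positivity
    linarith
  -- Step 3: real chain
  have h3 : (∑ a ∈ A, (2:ℝ) ^ (∑ i, a i)) ≤ t⁻¹ ^ M * ((1 - 2*t)⁻¹) ^ n := by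
    have step1 : (∑ a ∈ A, (2:ℝ) ^ (∑ i, a i)) ≤
        ∑ a ∈ A, t⁻¹ ^ M * (2*t) ^ (∑ i, a i) := by
      refine Finset.sum_le_sum fun a ha => ?_
      have hsle : ∑ i, a i ≤ M := (Finset.mem_filter.mp ha).2
      have : (2:ℝ) ^ (∑ i, a i) = t⁻¹ ^ (∑ i, a i) * (2*t) ^ (∑ i, a i) := by
        rw [← mul_pow]
        congr 1
        field_simp
      rw [this]
      have : t⁻¹ ^ (∑ i, a i) ≤ t⁻¹ ^ M := pow_le_pow_right₀ htinv1 hsle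
      exact mul_le_mul_of_nonneg_right this (by positivity)
    rw [← Finset.mul_sum] at step1
    refine step1.trans ?_
    refine mul_le_mul_of_nonneg_left ?_ (by positivity)
    calc ∑ a ∈ A, (2*t) ^ (∑ i, a i)
        ≤ ∑ a ∈ Fintype.piFinset (fun _ : Fin n => Finset.range (M + 1)),
            (2*t) ^ (∑ i, a i) := by
          refine Finset.sum_le_sum_of_subset_of_nonneg (Finset.filter_subset _ _)
            (fun a _ _ => by positivity)
      _ = ∏ i : Fin n, ∑ j ∈ Finset.range (M + 1), (2*t) ^ j := by
          rw [Finset.prod_univ_sum]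
          refine Finset.sum_congr rfl fun a _ => ?_
          rw [← prod_pow_eq_pow_sum]
      _ ≤ ∏ i : Fin n, (1 - 2*t)⁻¹ := by
          refine Finset.prod_le_prod (fun i _ => by positivity)
            (fun i _ => geom_bound h2t0 h2t1 _)
      _ = ((1 - 2*t)⁻¹) ^ n := by rw [Finset.prod_const, Finset.card_univ, Fintype.card_fin]
  -- Step 4: final arithmetic
  have hbase : t⁻¹ ^ (k+1) * ((1 - 2*t)⁻¹) ≤ Real.exp 1 * ((k:ℝ) + 2) * 2 ^ (k + 1) := by
    rw [h1m2t, htinv, mul_pow]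
    have he : (((k:ℝ) + 2) / ((k:ℝ) + 1)) ^ (k+1) ≤ Real.exp 1 := by
      have heq : ((k:ℝ) + 2) / ((k:ℝ) + 1) = 1 / ((k:ℝ)+1) + 1 := by field_simp; ring
      have h4 : 1 / ((k:ℝ)+1) + 1 ≤ Real.exp (1 / ((k:ℝ)+1)) :=
        Real.add_one_le_exp _
      calc (((k:ℝ) + 2) / ((k:ℝ) + 1)) ^ (k+1)
          ≤ (Real.exp (1 / ((k:ℝ)+1))) ^ (k+1) := by
            rw [heq]; exact pow_le_pow_left₀ (by positivity) h4 _
        _ = Real.exp ((k+1 : ℕ) * (1 / ((k:ℝ)+1))) := by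
            rw [Real.exp_nat_mul]
        _ = Real.exp 1 := by
            congr 1
            push_cast
            field_simp
    calc (2:ℝ) ^ (k+1) * (((k:ℝ) + 2) / ((k:ℝ) + 1)) ^ (k+1) * ((k:ℝ) + 2)
        ≤ (2:ℝ) ^ (k+1) * Real.exp 1 * ((k:ℝ) + 2) := by
          refine mul_le_mul_of_nonneg_right (mul_le_mul_of_nonneg_left he (by positivity))
            (by positivity)
      _ = Real.exp 1 * ((k:ℝ) + 2) * 2 ^ (k + 1) := by ring
  -- Put everything together
  have hcast : ((S.ncard : ℕ) : ℝ) ≤ ∑ a ∈ A, (2:ℝ) ^ (∑ i, a i) := by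
    calc ((S.ncard : ℕ) : ℝ) ≤ (T.card : ℝ) := by exact_mod_cast h1
      _ = ∑ a ∈ A, (2:ℝ) ^ (∑ i, a i) := by rw [h2]; push_cast; rfl
  refine (hcast.trans h3).trans ?_
  rw [hM, pow_mul, ← mul_pow]
  have hnn : (0:ℝ) ≤ t⁻¹ ^ (k+1) * (1 - 2*t)⁻¹ := by rw [h1m2t]; positivity
  refine pow_le_pow_left₀ hnn ?_ n
  push_cast at hbase ⊢
  exact hbase
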